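/- Let N : ℕ → ℕ → ℕ satisfy the recurrence N(ℓ,1) = 1 for all ℓ ≥ 1; N(1,m) = m − 1 for all m ≥ 2; N(ℓ,m) = N(m,m) for all ℓ > m ≥ 2; and N(ℓ,m) = ∑_{j=1}^{m−1} N(ℓ−1,j) for all 2 ≤ ℓ ≤ m. Define the oracle capacity F by F(1,m) = m and F(ℓ,m) = ∑_{j=1}^{m} N(ℓ−1,j) for ℓ ≥ 2. Then for all ℓ ≥ 1 and m ≥ 1: F(ℓ,m) = 2^(m−1) if ℓ ≥ m − 1, and F(ℓ,m) = ∑_{j=0}^{ℓ} C(m−1, j) if 1 ≤ ℓ ≤ m − 2, where C(·,·) denotes the binomial coefficient. -/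

import Mathlib

open Finset

private def sB (k n : ℕ) : ℕ := ∑ i ∈ range (k+1), Nat.choose n i

private lemma sB_zero_right (k : ℕ) : sB k 0 = 1 := by
  unfold sB
  rw [Finset.sum_eq_single 0]
  · simp
  · intro b _ hb
    exact Nat.choose_eq_zero_of_lt (Nat.pos_of_ne_zero hb)
  · intro h
    exact absurd (Finset.mem_range.2 (Nat.succ_pos k)) h

private lemma sB_pascal (k n : ℕ) : sB (k+1) (n+1) = sB (k+1) n + sB k n := by
  unfold sB
  rw [Finset.sum_range_succ' (fun i => Nat.choose (n+1) i) (k+1)]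
  simp only [Nat.choose_succ_succ, Nat.choose_zero_right]
  rw [Finset.sum_add_distrib]
  rw [Finset.sum_range_succ' (fun i => Nat.choose n i) (k+1)]
  simp only [Nat.choose_zero_right]
  ring

private lemma sB_tele (k M : ℕ) : 1 + ∑ n ∈ range M, sB k n = sB (k+1) M := by
  induction M with
  | zero => simp [sB_zero_right]
  | succ M ih =>
    rw [Finset.sum_range_succ, ← add_assoc, ih, sB_pascal]

private lemma sB_stable {l n : ℕ} (h : n ≤ l) : sB l n = sB n n := by
  unfold sB
  refine (Finset.sum_subset ?_ ?_).symm
  · exact Finset.range_subset_range.2 (by omega)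
  · intro x hx hx'
    simp only [Finset.mem_range] at hx hx'
    exact Nat.choose_eq_zero_of_lt (by omega)

theorem oracle_capacity_formula
    (N : ℕ → ℕ → ℕ)
    (h1 : ∀ l, 1 ≤ l → N l 1 = 1)
    (h2 : ∀ m, 2 ≤ m → N 1 m = m - 1)
    (h3 : ∀ l m, 2 ≤ m → m < l → N l m = N m m)
    (h4 : ∀ l m, 2 ≤ l → l ≤ m → N l m = ∑ j ∈ Finset.Icc 1 (m - 1), N (l - 1) j)
    (F : ℕ → ℕ → ℕ)
    (hF1 : ∀ m, F 1 m = m)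
    (hF2 : ∀ l m, 2 ≤ l → F l m = ∑ j ∈ Finset.Icc 1 m, N (l - 1) j) :
    ∀ l, 1 ≤ l → ∀ m, 1 ≤ m →
      (m - 1 ≤ l → F l m = 2 ^ (m - 1)) ∧
      (1 ≤ l → l ≤ m - 2 →
        F l m = ∑ j ∈ Finset.range (l + 1), Nat.choose (m - 1) j) := by
  -- key lemma about N
  have Nval : ∀ l, 1 ≤ l → ∀ m, 2 ≤ m → N l m = sB l (m-2) := by
    intro l
    induction l using Nat.strong_induction_on with
    | _ l ih =>
      intro hl m hm
      rcases Nat.lt_or_ge l 2 with hl2 | hl2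
      · -- l = 1
        have : l = 1 := by omega
        subst this
        rw [h2 m hm]
        unfold sB
        rw [show (1:ℕ)+1 = 2 from rfl, Finset.sum_range_succ, Finset.sum_range_one]
        simp only [Nat.choose_zero_right, Nat.choose_one_right]
        omega
      · rcases Nat.lt_or_ge m l with hml | hlm
        · -- l > m
          rw [h3 l m hm hml, ih m hml (by omega) m hm]
          rw [sB_stable (show m-2 ≤ m by omega), sB_stable (show m-2 ≤ l by omega)]
        · -- 2 ≤ l ≤ m
          rw [h4 l m hl2 hlm]
          have h1m : (1:ℕ) ≤ m - 1 := by omega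
          rw [← Finset.Ico_add_one_right_eq_Icc, Finset.sum_Ico_eq_sum_range]
          have hrange : m - 1 + 1 - 1 = (m-2) + 1 := by omega
          rw [hrange]
          rw [Finset.sum_range_succ' (fun i => N (l-1) (1+i)) (m-2)]
          have e1 : N (l-1) (1+0) = 1 := h1 (l-1) (by omega)
          have e2 : ∀ i ∈ range (m-2), N (l-1) (1+(i+1)) = sB (l-1) i := by
            intro i _
            have := ih (l-1) (by omega) (by omega) (1+(i+1)) (by omega)
            rw [this]
            congr 1
            omega
          rw [Finset.sum_congr rfl e2, e1]
          have := sB_tele (l-1) (m-2)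
          have hl1 : l - 1 + 1 = l := by omega
          rw [hl1] at this
          rw [add_comm]; exact this
  -- key lemma about F
  have Fval : ∀ l, 1 ≤ l → ∀ m, 1 ≤ m → F l m = sB l (m-1) := by
    intro l hl m hm
    rcases Nat.lt_or_ge l 2 with hl2 | hl2
    · have : l = 1 := by omega
      subst this
      rw [hF1 m]
      unfold sB
      rw [show (1:ℕ)+1 = 2 from rfl, Finset.sum_range_succ, Finset.sum_range_one]
      simp only [Nat.choose_zero_right, Nat.choose_one_right]
      omega
    · rw [hF2 l m hl2]
      rw [← Finset.Ico_add_one_right_eq_Icc, Finset.sum_Ico_eq_sum_range]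
      have hrange : m + 1 - 1 = (m-1) + 1 := by omega
      rw [hrange]
      rw [Finset.sum_range_succ' (fun i => N (l-1) (1+i)) (m-1)]
      have e1 : N (l-1) (1+0) = 1 := h1 (l-1) (by omega)
      have e2 : ∀ i ∈ range (m-1), N (l-1) (1+(i+1)) = sB (l-1) i := by
        intro i _
        have := Nval (l-1) (by omega) (1+(i+1)) (by omega)
        rw [this]
        congr 1
        omega
      rw [Finset.sum_congr rfl e2, e1]
      have := sB_tele (l-1) (m-1)
      have hl1 : l - 1 + 1 = l := by omega
      rw [hl1] at this
      rw [add_comm]; exact this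
  intro l hl m hm
  constructor
  · intro hml
    rw [Fval l hl m hm, sB_stable hml]
    unfold sB
    exact Nat.sum_range_choose (m-1)
  · intro _ _
    exact Fval l hl m hm
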